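/- For the single Plackett-Luce model with parameters θ, any linear order σ* consistent with θ (i.e., a_i ≻_{σ*} a_j whenever θ_i > θ_j, ties broken by index) minimizes the expected Kendall's Tau distance E_{τ∼θ}[d_kt(σ, τ)] over all linear orders σ. -/

import Mathlib

open Finset

/-- Kendall's Tau distance between two rankings of `m` alternatives.
A ranking is a permutation `σ` of `Fin m`, where `σ i` is the rank (position)
of alternative `i`, so `a_i ≻_σ a_j` iff `σ i < σ j`. `ktDist σ τ` is the
number of ordered pairs `(i, j)` with `a_i ≻_σ a_j` and `a_j ≻_τ a_i`. -/
def ktDist {m : ℕ} (σ τ : Equiv.Perm (Fin m)) : ℕ :=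
  (Finset.univ.filter (fun p : Fin m × Fin m => σ p.1 < σ p.2 ∧ τ p.2 < τ p.1)).card

/-- The probability assigned by the Plackett–Luce model with parameters `θ`
to the ranking `σ` (where `σ i` is the rank of alternative `i`): at each
position `k`, the alternative placed there (namely `σ.symm k`) is chosen
among the remaining alternatives with probability proportional to its
parameter. -/
noncomputable def PLprob {m : ℕ} (θ : Fin m → ℝ) (σ : Equiv.Perm (Fin m)) : ℝ :=
  ∏ k : Fin m, θ (σ.symm k) / ∑ i ∈ Finset.univ.filter (fun i => k ≤ σ i), θ i

/-- For the single Plackett–Luce model with positive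
parameters `θ`, any linear order `σ*` consistent with `θ` (i.e., `a_i ≻_{σ*} a_j`
whenever `θ_i > θ_j`, ties broken by index) minimizes the expected Kendall's
Tau distance `E_{τ∼θ}[d_kt(σ, τ)]` over all linear orders `σ`. -/
noncomputable def PLS {m : ℕ} (θ : Fin m → ℝ) (τ : Equiv.Perm (Fin m)) (k : Fin m) : ℝ :=
  ∑ i ∈ Finset.univ.filter (fun i => k ≤ τ i), θ i

lemma PLprob_eq {m : ℕ} (θ : Fin m → ℝ) (τ : Equiv.Perm (Fin m)) :
    PLprob θ τ = (∏ i : Fin m, θ i) / ∏ k : Fin m, PLS θ τ k := by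
  rw [PLprob, Finset.prod_div_distrib, Equiv.prod_comp τ.symm θ]
  rfl

lemma PLS_pos {m : ℕ} (θ : Fin m → ℝ) (hθ : ∀ i, 0 < θ i) (τ : Equiv.Perm (Fin m)) (k : Fin m) :
    0 < PLS θ τ k := by
  apply Finset.sum_pos (fun i _ => hθ i)
  exact ⟨τ.symm k, by simp⟩

lemma PLS_swap_le {m : ℕ} (θ : Fin m → ℝ) (τ : Equiv.Perm (Fin m)) (i j : Fin m)
    (hij : i ≠ j) (hθ : θ j ≤ θ i) (hτ : τ i < τ j) (k : Fin m) :
    PLS θ τ k ≤ PLS θ (τ * Equiv.swap i j) k := by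
  have hg : ∀ ρ : Equiv.Perm (Fin m),
      PLS θ ρ k = ∑ x : Fin m, if k ≤ ρ x then θ x else 0 := by
    intro ρ; rw [PLS, Finset.sum_filter]
  rw [hg, hg]
  have hji : j ≠ i := hij.symm
  have hsplit : ∀ f : Fin m → ℝ, ∑ x : Fin m, f x
      = f i + (f j + ∑ x ∈ (Finset.univ.erase i).erase j, f x) := by
    intro f
    rw [← Finset.add_sum_erase _ f (Finset.mem_univ i),
      ← Finset.add_sum_erase _ f (by simp [hji] : j ∈ Finset.univ.erase i)]
  rw [hsplit, hsplit]
  have htail : ∑ x ∈ (Finset.univ.erase i).erase j, (if k ≤ (τ * Equiv.swap i j) x then θ x else 0)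
      = ∑ x ∈ (Finset.univ.erase i).erase j, (if k ≤ τ x then θ x else 0) := by
    apply Finset.sum_congr rfl
    intro x hx
    simp only [Finset.mem_erase] at hx
    rw [Equiv.Perm.mul_apply, Equiv.swap_apply_of_ne_of_ne hx.2.1 hx.1]
  rw [htail]
  have h1 : (τ * Equiv.swap i j) i = τ j := by simp
  have h2 : (τ * Equiv.swap i j) j = τ i := by simp
  rw [h1, h2]
  rcases le_or_gt k (τ i) with hki | hki <;> rcases le_or_gt k (τ j) with hkj | hkj <;>
    simp [hki, hkj, not_le.2, le_of_lt] <;> first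
  | linarith
  | (exfalso; exact absurd (hki.trans hτ.le) (not_le.2 hkj))

lemma PLprob_swap_le {m : ℕ} (θ : Fin m → ℝ) (hθ : ∀ i, 0 < θ i) (τ : Equiv.Perm (Fin m))
    (i j : Fin m) (hij : i ≠ j) (hθij : θ j ≤ θ i) (hτ : τ i < τ j) :
    PLprob θ (τ * Equiv.swap i j) ≤ PLprob θ τ := by
  rw [PLprob_eq, PLprob_eq]
  apply div_le_div_of_nonneg_left
  · exact le_of_lt (Finset.prod_pos (fun i _ => hθ i))
  · exact Finset.prod_pos (fun k _ => PLS_pos θ hθ τ k)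
  · exact Finset.prod_le_prod (fun k _ => (PLS_pos θ hθ τ k).le)
      (fun k _ => PLS_swap_le θ τ i j hij hθij hτ k)

noncomputable def PLbefore {m : ℕ} (θ : Fin m → ℝ) (x y : Fin m) : ℝ :=
  ∑ τ : Equiv.Perm (Fin m), if τ x < τ y then PLprob θ τ else 0

lemma PLbefore_le {m : ℕ} (θ : Fin m → ℝ) (hθ : ∀ i, 0 < θ i) (i j : Fin m)
    (hij : i ≠ j) (hθij : θ j ≤ θ i) : PLbefore θ j i ≤ PLbefore θ i j := by
  rw [PLbefore, PLbefore]
  rw [← Equiv.sum_comp (Equiv.mulRight (Equiv.swap i j))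
    (fun τ => if τ j < τ i then PLprob θ τ else 0)]
  apply Finset.sum_le_sum
  intro τ _
  simp only [Equiv.coe_mulRight, Equiv.Perm.mul_apply, Equiv.swap_apply_left,
    Equiv.swap_apply_right]
  split_ifs with h
  · exact PLprob_swap_le θ hθ τ i j hij hθij h
  · exact le_refl 0

noncomputable def Ekt {m : ℕ} (θ : Fin m → ℝ) (σ : Equiv.Perm (Fin m)) : ℝ :=
  ∑ p : Fin m × Fin m, if σ p.1 < σ p.2 then PLbefore θ p.2 p.1 else 0

lemma expected_eq {m : ℕ} (θ : Fin m → ℝ) (σ : Equiv.Perm (Fin m)) :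
    ∑ τ : Equiv.Perm (Fin m), PLprob θ τ * (ktDist σ τ : ℝ) = Ekt θ σ := by
  have h1 : ∀ τ : Equiv.Perm (Fin m), PLprob θ τ * (ktDist σ τ : ℝ)
      = ∑ p : Fin m × Fin m,
          if σ p.1 < σ p.2 then (if τ p.2 < τ p.1 then PLprob θ τ else 0) else 0 := by
    intro τ
    rw [ktDist, Finset.card_filter]
    push_cast
    rw [Finset.mul_sum]
    apply Finset.sum_congr rfl
    intro p _
    rw [mul_ite, mul_one, mul_zero, ite_and]
  simp_rw [h1]
  rw [Finset.sum_comm, Ekt]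
  apply Finset.sum_congr rfl
  intro p _
  by_cases h : σ p.1 < σ p.2 <;> simp [h, PLbefore]

lemma Ekt_eq_pairs {m : ℕ} (θ : Fin m → ℝ) (σ : Equiv.Perm (Fin m)) :
    Ekt θ σ = ∑ p ∈ Finset.univ.filter (fun p : Fin m × Fin m => p.1 < p.2),
      ((if σ p.1 < σ p.2 then PLbefore θ p.2 p.1 else 0)
        + (if σ p.2 < σ p.1 then PLbefore θ p.1 p.2 else 0)) := by
  rw [Ekt, ← Finset.sum_filter_add_sum_filter_not Finset.univ
    (fun p : Fin m × Fin m => p.1 < p.2)]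
  rw [Finset.sum_add_distrib]
  congr 1
  have hsub : Finset.univ.filter (fun p : Fin m × Fin m => p.2 < p.1)
      ⊆ Finset.univ.filter (fun p : Fin m × Fin m => ¬ p.1 < p.2) := by
    intro p hp
    simp only [Finset.mem_filter, Finset.mem_univ, true_and] at hp ⊢
    exact not_lt.2 hp.le
  rw [← Finset.sum_subset hsub]
  · apply Finset.sum_nbij' (fun p => Prod.swap p) (fun p => Prod.swap p)
    · intro p hp
      simp only [Finset.mem_filter, Finset.mem_univ, true_and] at hp ⊢
      exact hp
    · intro p hp
      simp only [Finset.mem_filter, Finset.mem_univ, true_and] at hp ⊢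
      exact hp
    · intro p _; simp
    · intro p _; simp
    · intro p _; simp
  · intro p hp hnp
    simp only [Finset.mem_filter, Finset.mem_univ, true_and, not_lt] at hp hnp
    have : p.1 = p.2 := le_antisymm hnp hp
    simp [this]

theorem PL_consistent_order_minimizes {m : ℕ} (θ : Fin m → ℝ) (hθ : ∀ i, 0 < θ i)
    (σstar : Equiv.Perm (Fin m))
    (hcons : ∀ i j : Fin m, (θ j < θ i ∨ (θ i = θ j ∧ i < j)) → σstar i < σstar j)
    (σ : Equiv.Perm (Fin m)) :
    ∑ τ : Equiv.Perm (Fin m), PLprob θ τ * (ktDist σstar τ : ℝ)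
      ≤ ∑ τ : Equiv.Perm (Fin m), PLprob θ τ * (ktDist σ τ : ℝ) := by
  rw [expected_eq θ σstar, expected_eq θ σ, Ekt_eq_pairs θ σstar, Ekt_eq_pairs θ σ]
  apply Finset.sum_le_sum
  intro p hp
  simp only [Finset.mem_filter, Finset.mem_univ, true_and] at hp
  obtain ⟨i, j⟩ := p
  simp only at hp ⊢
  have hne : i ≠ j := ne_of_lt hp
  have hgσ : ∀ ρ : Equiv.Perm (Fin m),
      (if ρ i < ρ j then PLbefore θ j i else 0) + (if ρ j < ρ i then PLbefore θ i j else 0)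
        = PLbefore θ j i ∨
      (if ρ i < ρ j then PLbefore θ j i else 0) + (if ρ j < ρ i then PLbefore θ i j else 0)
        = PLbefore θ i j := by
    intro ρ
    have hρne : ρ i ≠ ρ j := fun h => hne (ρ.injective h)
    rcases lt_or_gt_of_ne hρne with h | h
    · left; rw [if_pos h, if_neg (asymm h), add_zero]
    · right; rw [if_neg (asymm h), if_pos h, zero_add]
  rcases lt_trichotomy (θ i) (θ j) with hθij | hθij | hθij
  · have hs : σstar j < σstar i := hcons j i (Or.inl hθij)
    rw [if_neg (asymm hs), if_pos hs, zero_add]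
    have hle : PLbefore θ i j ≤ PLbefore θ j i := PLbefore_le θ hθ j i hne.symm hθij.le
    rcases hgσ σ with h | h
    · rw [h]; exact hle
    · rw [h]
  · have hs : σstar i < σstar j := hcons i j (Or.inr ⟨hθij, hp⟩)
    rw [if_pos hs, if_neg (asymm hs), add_zero]
    have h1 : PLbefore θ j i ≤ PLbefore θ i j := PLbefore_le θ hθ i j hne hθij.ge
    have h2 : PLbefore θ i j ≤ PLbefore θ j i := PLbefore_le θ hθ j i hne.symm hθij.le
    rcases hgσ σ with h | h
    · rw [h]
    · rw [h]; exact h1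
  · have hs : σstar i < σstar j := hcons i j (Or.inl hθij)
    rw [if_pos hs, if_neg (asymm hs), add_zero]
    have hle : PLbefore θ j i ≤ PLbefore θ i j := PLbefore_le θ hθ i j hne hθij.le
    rcases hgσ σ with h | h
    · rw [h]
    · rw [h]; exact hle
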